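/- Let σ be an involution of a finitely generated free abelian group Λ, acting on M = Λ* × (R/Z) (affine functions on T = (Λ⊗R)/Λ twisted by the involution x ↦ σ(x) + t̃ mod Λ) by σ(λ, u) = (-σ*(λ), -λ(t̃) - u), where t̃ ∈ Λ⊗R satisfies: the class c = [t̃ + σ(t̃)] ∈ H²(Z/2; Λ) is nonzero. Then the natural map H²(Z/2; R/Z₋) → H²(Z/2; M) (induced by u ↦ (0,u), where R/Z₋ has σ(u) = -u) is the zero map. -/

import Mathlib

/-- The subgroup of `σ`-fixed elements `{m ∈ M | σ m = m}`. -/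
def fixedSub {M : Type*} [AddCommGroup M] (σ : M →+ M) : AddSubgroup M where
  carrier := {m | σ m = m}
  zero_mem' := by simp
  add_mem' := by
    intro a b ha hb
    simp only [Set.mem_setOf_eq, map_add] at *
    rw [ha, hb]
  neg_mem' := by
    intro a ha
    simp only [Set.mem_setOf_eq, map_neg] at *
    rw [ha]

theorem mem_fixedSub {M : Type*} [AddCommGroup M] {σ : M →+ M} {m : M} :
    m ∈ fixedSub σ ↔ σ m = m := Iff.rfl

/-- The image of the norm map `n ↦ n + σ n`. -/
def normIm {M : Type*} [AddCommGroup M] (σ : M →+ M) : AddSubgroup M :=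
  (AddMonoidHom.id M + σ).range

/-- `H²(ℤ/2; M) = {m | σ m = m} / {n + σ n | n ∈ M}`. -/
abbrev H2Z2 {M : Type*} [AddCommGroup M] (σ : M →+ M) :=
  fixedSub σ ⧸ (normIm σ).addSubgroupOf (fixedSub σ)

/-- The involution `u ↦ -u` on `(ℝ/ℤ)₋`. -/
noncomputable def σcirc : AddCircle (1 : ℝ) →+ AddCircle (1 : ℝ) :=
  -(AddMonoidHom.id _)

/-- The involution `σ (λ, u) = (-σ*(λ), -λ(t̃) - u)` on the module
`M = Λ* × ℝ/ℤ` of (sign-twisted) affine `S¹`-valued functions on the torus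
`T = ℝ^b/ℤ^b` with involution `x ↦ A x + t̃ mod ℤ^b`.  Here `Λ = ℤ^b`, `σ = A` is an
involutive integer matrix, `σ*(λ) = λᵀA`, and `λ(t̃) = ∑ λᵢ t̃ᵢ`. -/
noncomputable def σaff (b : ℕ) (A : Matrix (Fin b) (Fin b) ℤ) (t : Fin b → ℝ) :
    ((Fin b → ℤ) × AddCircle (1 : ℝ)) →+ ((Fin b → ℤ) × AddCircle (1 : ℝ)) where
  toFun p := (-(Matrix.vecMul p.1 A),
    -((((∑ i, (p.1 i : ℝ) * t i : ℝ)) : AddCircle (1 : ℝ))) - p.2)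
  map_zero' := by
    simp [Matrix.zero_vecMul]
  map_add' p q := by
    refine Prod.ext ?_ ?_
    · simp only [Prod.fst_add, Matrix.add_vecMul, neg_add]
    · simp only [Prod.snd_add, Prod.fst_add, Pi.add_apply]
      have h1 : (∑ i, ((p.1 i + q.1 i : ℤ) : ℝ) * t i)
          = (∑ i, (p.1 i : ℝ) * t i) + ∑ i, (q.1 i : ℝ) * t i := by
        rw [← Finset.sum_add_distrib]
        refine Finset.sum_congr rfl fun i _ => by push_cast; ring
      rw [h1, AddCircle.coe_add]
      abel

/-- The inclusion `u ↦ (0, u)` restricted to fixed points. -/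
noncomputable def ιfix (b : ℕ) (A : Matrix (Fin b) (Fin b) ℤ) (t : Fin b → ℝ) :
    fixedSub σcirc →+ fixedSub (σaff b A t) :=
  ((AddMonoidHom.inr (Fin b → ℤ) (AddCircle (1 : ℝ))).comp
      (fixedSub σcirc).subtype).codRestrict (fixedSub (σaff b A t)) (by
    intro x
    have hx : σcirc (x : AddCircle (1 : ℝ)) = x := x.2
    simp only [σcirc, AddMonoidHom.neg_apply, AddMonoidHom.id_apply] at hx
    simp only [AddMonoidHom.comp_apply, AddSubgroup.coe_subtype, AddMonoidHom.inr_apply,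
      mem_fixedSub, σaff, AddMonoidHom.coe_mk, ZeroHom.coe_mk]
    refine Prod.ext ?_ ?_
    · simp [Matrix.zero_vecMul]
    · simp only [Pi.zero_apply, Int.cast_zero, zero_mul, Finset.sum_const_zero]
      rw [show (((0 : ℝ) : AddCircle (1 : ℝ))) = 0 from rfl]
      rw [neg_zero, zero_sub, hx])

/-- The induced map `H²(ℤ/2; (ℝ/ℤ)₋) → H²(ℤ/2; M)`. -/
noncomputable def indAff (b : ℕ) (A : Matrix (Fin b) (Fin b) ℤ) (t : Fin b → ℝ) :
    H2Z2 σcirc →+ H2Z2 (σaff b A t) :=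
  QuotientAddGroup.map _ _ (ιfix b A t) (by
    intro x hx
    rw [AddSubgroup.mem_addSubgroupOf] at hx
    rw [AddSubgroup.mem_comap, AddSubgroup.mem_addSubgroupOf]
    obtain ⟨n, hn⟩ := hx
    refine ⟨((0 : Fin b → ℤ), n), ?_⟩
    simp only [AddMonoidHom.add_apply, AddMonoidHom.id_apply] at hn ⊢
    have hcoe : ((ιfix b A t x : (Fin b → ℤ) × AddCircle (1 : ℝ)))
        = ((0 : Fin b → ℤ), (x : AddCircle (1 : ℝ))) := rfl
    rw [hcoe, ← hn]
    simp only [σcirc, AddMonoidHom.neg_apply, AddMonoidHom.id_apply, σaff,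
      AddMonoidHom.coe_mk, ZeroHom.coe_mk]
    refine Prod.ext ?_ ?_
    · simp [Matrix.zero_vecMul]
    · simp only [Pi.zero_apply, Int.cast_zero, zero_mul, Finset.sum_const_zero,
        Prod.snd_add]
      rw [show (((0 : ℝ) : AddCircle (1 : ℝ))) = 0 from rfl]
      abel)

open Matrix in
lemma key_exists_odd {b : ℕ} (A : Matrix (Fin b) (Fin b) ℤ) (cZ : Fin b → ℤ)
    (hA : A * A = 1) (hAc : A.mulVec cZ = cZ)
    (hc : ¬ ∃ n : Fin b → ℤ, cZ = n + Matrix.mulVec A n) :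
    ∃ lam : Fin b → ℤ, Matrix.vecMul lam A = lam ∧ Odd (lam ⬝ᵥ cZ) := by
  classical
  set N : (Fin b → ℤ) →+ (Fin b → ℤ) :=
    { toFun := fun n => n + A.mulVec n
      map_zero' := by simp [Matrix.mulVec_zero]
      map_add' := fun x y => by
        simp only [Matrix.mulVec_add]; abel } with hNdef
  have hNapp : ∀ x, N x = x + A.mulVec x := fun _ => rfl
  set L := N.range with hLdef
  have hcL : cZ ∉ L := by
    rintro ⟨n, hn⟩
    exact hc ⟨n, hn.symm⟩
  have hne : (QuotientAddGroup.mk' L cZ) ≠ 0 := by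
    rw [Ne, QuotientAddGroup.mk'_apply, QuotientAddGroup.eq_zero_iff]
    exact hcL
  obtain ⟨χ, hχ⟩ := CharacterModule.exists_character_apply_ne_zero_of_ne_zero hne
  let χ' : ((Fin b → ℤ) ⧸ L) →+ AddCircle (1 : ℚ) := χ
  have hχ' : χ' (QuotientAddGroup.mk' L cZ) ≠ 0 := hχ
  set η : (Fin b → ℤ) →+ AddCircle (1 : ℚ) := χ'.comp (QuotientAddGroup.mk' L) with hηdef
  have hη0 : ∀ l ∈ L, η l = 0 := by
    intro l hl
    have h0 : QuotientAddGroup.mk' L l = 0 := by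
      rw [QuotientAddGroup.mk'_apply, QuotientAddGroup.eq_zero_iff]; exact hl
    rw [hηdef, AddMonoidHom.comp_apply, h0, map_zero]
  have hηc : η cZ ≠ 0 := hχ'
  set π : ℚ →+ AddCircle (1 : ℚ) := QuotientAddGroup.mk' (AddSubgroup.zmultiples (1 : ℚ))
    with hπdef
  have hπcoe : ∀ q : ℚ, π q = (q : AddCircle (1 : ℚ)) := fun _ => rfl
  set v : Fin b → ℚ := fun i => (η (Pi.single i 1)).out with hvdef
  have hv : ∀ i, π (v i) = η (Pi.single i 1) := fun i => QuotientAddGroup.out_eq' _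
  set h : (Fin b → ℤ) →+ ℚ :=
    { toFun := fun x => ∑ i, (x i : ℚ) * v i
      map_zero' := by simp
      map_add' := fun x y => by
        simp only [Pi.add_apply, Int.cast_add, add_mul, Finset.sum_add_distrib] } with hhdef
  have hhapp : ∀ x, h x = ∑ i, (x i : ℚ) * v i := fun _ => rfl
  have hrep : ∀ x : Fin b → ℤ, ∑ i, x i • Pi.single i (1 : ℤ) = x := by
    intro x
    ext j
    simp [Pi.single_apply, mul_ite]
  have hπh : ∀ x, π (h x) = η x := by
    intro x
    calc π (h x) = ∑ i, π ((x i : ℚ) * v i) := by rw [hhapp, map_sum]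
      _ = ∑ i, x i • π (v i) := by
          refine Finset.sum_congr rfl fun i _ => ?_
          rw [← zsmul_eq_mul, map_zsmul]
      _ = ∑ i, x i • η (Pi.single i 1) := by
          refine Finset.sum_congr rfl fun i _ => by rw [hv]
      _ = ∑ i, η (x i • Pi.single i 1) := by
          refine Finset.sum_congr rfl fun i _ => (map_zsmul η _ _).symm
      _ = η x := by rw [← map_sum, hrep]
  have hint : ∀ l ∈ L, ∃ m : ℤ, (m : ℚ) = h l := by
    intro l hl
    have h0 : π (h l) = 0 := by rw [hπh]; exact hη0 l hl
    rw [hπcoe, AddCircle.coe_eq_zero_iff] at h0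
    obtain ⟨m, hm⟩ := h0
    exact ⟨m, by simpa [zsmul_eq_mul] using hm⟩
  have hcnot : ¬ ∃ m : ℤ, (m : ℚ) = h cZ := by
    rintro ⟨m, hm⟩
    apply hηc
    rw [← hπh, ← hm, hπcoe, AddCircle.coe_eq_zero_iff]
    exact ⟨m, by simp [zsmul_eq_mul]⟩
  have hNL : ∀ x, N x ∈ L := fun x => ⟨x, rfl⟩
  choose lam hlam using fun j => hint (N (Pi.single j 1)) (hNL _)
  have hcomb : ∀ x : Fin b → ℤ, ∑ i, (x i : ℚ) * h (N (Pi.single i 1)) = h (N x) := by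
    intro x
    calc ∑ i, (x i : ℚ) * h (N (Pi.single i 1))
        = ∑ i, x i • h (N (Pi.single i 1)) := by
          refine Finset.sum_congr rfl fun i _ => (zsmul_eq_mul _ _).symm
      _ = ∑ i, h (N (x i • Pi.single i 1)) := by
          refine Finset.sum_congr rfl fun i _ => by rw [map_zsmul, map_zsmul]
      _ = h (N (∑ i, x i • Pi.single i 1)) := by rw [map_sum, map_sum]
      _ = h (N x) := by rw [hrep]
  refine ⟨lam, ?_, ?_⟩
  · funext j
    apply Int.cast_injective (α := ℚ)
    have hvm : ((Matrix.vecMul lam A) j : ℚ) = ∑ i, (lam i : ℚ) * (A i j : ℚ) := by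
      rw [Matrix.vecMul, dotProduct]
      push_cast
      rfl
    have hAcol : (fun i => A i j) = A.mulVec (Pi.single j 1) := by
      funext k
      simp [Matrix.mulVec, dotProduct, Pi.single_apply, mul_ite]
    have hNA : N (A.mulVec (Pi.single j 1)) = N (Pi.single j 1) := by
      rw [hNapp, hNapp, Matrix.mulVec_mulVec, hA, Matrix.one_mulVec]
      abel
    calc ((Matrix.vecMul lam A) j : ℚ)
        = ∑ i, (lam i : ℚ) * (A i j : ℚ) := hvm
      _ = ∑ i, ((A i j : ℚ)) * h (N (Pi.single i 1)) := by
          refine Finset.sum_congr rfl fun i _ => by rw [hlam i]; ring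
      _ = h (N (fun i => A i j)) := hcomb _
      _ = h (N (Pi.single j 1)) := by rw [hAcol, hNA]
      _ = ((lam j : ℚ)) := (hlam j).symm
  · have h2 : ((lam ⬝ᵥ cZ : ℤ) : ℚ) = 2 * h cZ := by
      have e1 : ((lam ⬝ᵥ cZ : ℤ) : ℚ) = ∑ i, (cZ i : ℚ) * h (N (Pi.single i 1)) := by
        rw [dotProduct]
        push_cast
        refine Finset.sum_congr rfl fun i _ => by rw [hlam i]; ring
      rw [e1, hcomb, hNapp, hAc, map_add]
      ring
    rcases Int.even_or_odd (lam ⬝ᵥ cZ) with he | ho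
    · exfalso
      obtain ⟨w, hw⟩ := he
      apply hcnot
      refine ⟨w, ?_⟩
      have e2 : ((w + w : ℤ) : ℚ) = 2 * h cZ := by rw [← hw]; exact h2
      push_cast at e2
      linarith
    · exact ho

/-- Let `σ = A` be an involution of `Λ = ℤ^b` and `t̃ ∈ ℝ^b` with
`t̃ + σ(t̃) = c ∈ Λ` (so `x ↦ σ x + t̃` is an affine involution of the torus), and
suppose the class of `c` in `H²(ℤ/2; Λ)` is nonzero, i.e. `c ∉ {n + σ n}`.  Then the
natural map `H²(ℤ/2; (ℝ/ℤ)₋) → H²(ℤ/2; M)` induced by `u ↦ (0, u)` is the zero map,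
where `M = Λ* × ℝ/ℤ` carries the involution `(λ, u) ↦ (-σ*(λ), -λ(t̃) - u)`. -/
theorem stmt15 (b : ℕ) (A : Matrix (Fin b) (Fin b) ℤ) (t : Fin b → ℝ)
    (hA : A * A = 1) (cZ : Fin b → ℤ)
    (hcZ : ∀ i, (cZ i : ℝ) = t i + Matrix.mulVec (A.map fun z : ℤ => (z : ℝ)) t i)
    (hc : ¬ ∃ n : Fin b → ℤ, cZ = n + Matrix.mulVec A n) :
    ∀ x : H2Z2 σcirc, indAff b A t x = 0 := by
    classical
  -- notation
  set AR := A.map fun z : ℤ => (z : ℝ) with hARdef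
  have hAA : AR * AR = 1 := by
    have hmap : AR = A.map (Int.castRingHom ℝ) := rfl
    rw [hmap, ← Matrix.map_mul, hA, Matrix.map_one _ (by simp) (by simp)]
  -- cZ is fixed by A over ℤ
  have hcastmv : ∀ (x : Fin b → ℤ) (i : Fin b),
      ((A.mulVec x) i : ℝ) = (AR.mulVec fun k => (x k : ℝ)) i := by
    intro x i
    simp only [Matrix.mulVec, dotProduct, hARdef, Matrix.map_apply]
    push_cast
    rfl
  have hAc : A.mulVec cZ = cZ := by
    funext i
    apply Int.cast_injective (α := ℝ)
    have hceq : (fun k => (cZ k : ℝ)) = t + AR.mulVec t := by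
      funext k
      rw [hcZ k]
      rfl
    rw [hcastmv, hceq]
    calc (AR.mulVec (t + AR.mulVec t)) i
        = (AR.mulVec t + AR.mulVec (AR.mulVec t)) i := by rw [Matrix.mulVec_add]
      _ = (AR.mulVec t + (AR * AR).mulVec t) i := by rw [Matrix.mulVec_mulVec]
      _ = (AR.mulVec t + t) i := by rw [hAA, Matrix.one_mulVec]
      _ = (cZ i : ℝ) := by rw [hcZ i]; simp [add_comm]
  obtain ⟨lam, hlam, hodd⟩ := key_exists_odd A cZ hA hAc hc
  obtain ⟨w, hw⟩ := hodd
  -- real sum identity: 2 * S = dotProduct lam cZ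
  set S : ℝ := ∑ i, (lam i : ℝ) * t i with hSdef
  have hvmR : ∀ k, ∑ i, (lam i : ℝ) * (A i k : ℝ) = (lam k : ℝ) := by
    intro k
    have h1 : ((Matrix.vecMul lam A) k : ℝ) = ∑ i, (lam i : ℝ) * (A i k : ℝ) := by
      simp only [Matrix.vecMul, dotProduct]
      push_cast
      rfl
    rw [hlam] at h1
    exact h1.symm
  have hS2 : 2 * S = ((dotProduct lam cZ : ℤ) : ℝ) := by
    have hdot : ((dotProduct lam cZ : ℤ) : ℝ) = ∑ i, (lam i : ℝ) * (cZ i : ℝ) := by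
      simp only [dotProduct]
      push_cast
      rfl
    have hsecond : ∑ i, (lam i : ℝ) * (AR.mulVec t) i = S := by
      calc ∑ i, (lam i : ℝ) * (AR.mulVec t) i
          = ∑ i, ∑ k, (lam i : ℝ) * ((A i k : ℝ) * t k) := by
            refine Finset.sum_congr rfl fun i _ => ?_
            rw [Matrix.mulVec, dotProduct, Finset.mul_sum]
            refine Finset.sum_congr rfl fun k _ => ?_
            rw [hARdef]
            simp [Matrix.map_apply]
        _ = ∑ k, ∑ i, (lam i : ℝ) * ((A i k : ℝ) * t k) := Finset.sum_comm
        _ = ∑ k, (∑ i, (lam i : ℝ) * (A i k : ℝ)) * t k := by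
            refine Finset.sum_congr rfl fun k _ => ?_
            rw [Finset.sum_mul]
            refine Finset.sum_congr rfl fun i _ => by ring
        _ = ∑ k, (lam k : ℝ) * t k := by
            refine Finset.sum_congr rfl fun k _ => by rw [hvmR]
        _ = S := rfl
    calc 2 * S = S + S := by ring
      _ = ∑ i, (lam i : ℝ) * t i + ∑ i, (lam i : ℝ) * (AR.mulVec t) i := by
          rw [hsecond]
      _ = ∑ i, ((lam i : ℝ) * t i + (lam i : ℝ) * (AR.mulVec t) i) :=
          (Finset.sum_add_distrib).symm
      _ = ∑ i, (lam i : ℝ) * (cZ i : ℝ) := by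
          refine Finset.sum_congr rfl fun i _ => ?_
          rw [hcZ i]
          ring
      _ = ((dotProduct lam cZ : ℤ) : ℝ) := by
          simp only [dotProduct]
          push_cast
          rfl
  intro x
  refine QuotientAddGroup.induction_on x fun u => ?_
  have hmapmk : indAff b A t (QuotientAddGroup.mk u) = QuotientAddGroup.mk (ιfix b A t u) :=
    QuotientAddGroup.map_mk _ _ _ _ _
  rw [hmapmk]
  rw [QuotientAddGroup.eq_zero_iff]
  rw [AddSubgroup.mem_addSubgroupOf]
  have hval : ((ιfix b A t u : ↥(fixedSub (σaff b A t))) : (Fin b → ℤ) × AddCircle (1 : ℝ))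
      = ((0 : Fin b → ℤ), (u : AddCircle (1 : ℝ))) := rfl
  -- extract representative of u
  have hu2 : (u : AddCircle (1 : ℝ)) + (u : AddCircle (1 : ℝ)) = 0 := by
    have h' : σcirc ((u : AddCircle (1 : ℝ))) = (u : AddCircle (1 : ℝ)) := u.2
    simp only [σcirc, AddMonoidHom.neg_apply, AddMonoidHom.id_apply] at h'
    calc ((u : AddCircle (1 : ℝ))) + (u : AddCircle (1 : ℝ))
        = -(u : AddCircle (1 : ℝ)) + (u : AddCircle (1 : ℝ)) := by rw [h']
      _ = 0 := neg_add_cancel _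
  set r : ℝ := Quotient.out (u : AddCircle (1 : ℝ)) with hrdef
  have hr : (r : AddCircle (1 : ℝ)) = (u : AddCircle (1 : ℝ)) := QuotientAddGroup.out_eq' _
  have h2r : ((r + r : ℝ) : AddCircle (1 : ℝ)) = 0 := by
    rw [AddCircle.coe_add, hr, hu2]
  rw [AddCircle.coe_eq_zero_iff] at h2r
  obtain ⟨k, hk⟩ := h2r
  have hk' : (k : ℝ) = r + r := by simpa [zsmul_eq_mul] using hk
  -- the norm element
  refine ⟨((fun i => -k * lam i : Fin b → ℤ), (0 : AddCircle (1 : ℝ))), ?_⟩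
  rw [AddMonoidHom.add_apply, AddMonoidHom.id_apply, hval]
  have hvm' : Matrix.vecMul (fun i => -k * lam i) A = fun i => -k * lam i := by
    funext j
    have e1 : Matrix.vecMul (fun i => -k * lam i) A j = ∑ i, (-k * lam i) * A i j := by
      simp [Matrix.vecMul, dotProduct]
    have e2 : Matrix.vecMul lam A j = ∑ i, lam i * A i j := by
      simp [Matrix.vecMul, dotProduct]
    have e3 : ∑ i, (-k * lam i) * A i j = -k * ∑ i, lam i * A i j := by
      rw [Finset.mul_sum]
      exact Finset.sum_congr rfl fun i _ => by ring
    rw [e1, e3, ← e2, hlam]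
  simp only [σaff, AddMonoidHom.coe_mk, ZeroHom.coe_mk]
  refine Prod.ext ?_ ?_
  · show (fun i => -k * lam i) + -(Matrix.vecMul (fun i => -k * lam i) A) = 0
    rw [hvm']
    abel
  · show (0 : AddCircle (1 : ℝ)) +
      (-(((∑ i, ((-k * lam i : ℤ) : ℝ) * t i : ℝ) : AddCircle (1 : ℝ))) - 0)
      = (u : AddCircle (1 : ℝ))
    have hsum' : (∑ i, ((-k * lam i : ℤ) : ℝ) * t i) = -((k : ℝ) * S) := by
      rw [hSdef, Finset.mul_sum, ← Finset.sum_neg_distrib]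
      refine Finset.sum_congr rfl fun i _ => by push_cast; ring
    rw [hsum', zero_add, sub_zero, AddCircle.coe_neg, neg_neg, ← hr]
    rw [QuotientAddGroup.eq_iff_sub_mem, AddSubgroup.mem_zmultiples_iff]
    refine ⟨k * w, ?_⟩
    have hm : ((dotProduct lam cZ : ℤ) : ℝ) = 2 * (w : ℝ) + 1 := by rw [hw]; push_cast; ring
    rw [hm] at hS2
    rw [zsmul_eq_mul]
    push_cast
    linear_combination (-(k : ℝ) / 2) * hS2 + (-(1 : ℝ) / 2) * hk'
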